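/- Let N ≥ 1 and a be integers with 1 ≤ a ≤ N, let n ≥ m ≥ 0 be integers, and let z be a complex number with |z| < 1. Then ∏_{k=m}^{n} (1 − z²/(Nk+a)²)^{−1} = ∑_{l=0}^{∞} ⁿₘt*_{N,a}({2}^l) · z^{2l}, where ⁿₘt*_{N,a}({2}^l) = ∑_{n ≥ k_1 ≥ ⋯ ≥ k_l ≥ m} 1/((Nk_1+a)² ⋯ (Nk_l+a)²) for l ≥ 1 and ⁿₘt*_{N,a}({2}^0) = 1; in particular the power series on the right converges absolutely for |z| < 1. -/

import Mathlib

open Finset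

/-- `ⁿₘt*_{N,a}({2}^l) = ∑_{n ≥ k₁ ≥ ⋯ ≥ k_l ≥ m} 1/((Nk₁+a)²⋯(Nk_l+a)²)`, with value `1`
for `l = 0`. -/
noncomputable def tStarFinBetween (N a n m l : ℕ) : ℝ :=
  ∑ k : Fin l → Fin (n + 1),
    if (∀ i, m ≤ (k i : ℕ)) ∧ (∀ i j : Fin l, i ≤ j → (k j : ℕ) ≤ (k i : ℕ)) then
      ∏ i : Fin l, (1 : ℝ) / ((N : ℝ) * (k i : ℕ) + a) ^ 2
    else 0


lemma tStar_zero (N a n m : ℕ) : tStarFinBetween N a n m 0 = 1 := by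
  simp [tStarFinBetween]

lemma tStar_of_gt (N a n m : ℕ) (h : n < m) (l : ℕ) :
    tStarFinBetween N a n m (l + 1) = 0 := by
  unfold tStarFinBetween
  apply Finset.sum_eq_zero
  intro k _
  rw [if_neg]
  rintro ⟨h1, -⟩
  exact absurd ((h1 0).trans (k 0).is_le) (by omega)

lemma tStar_rec (N a n m : ℕ) (hm : m ≤ n) (l : ℕ) :
    tStarFinBetween N a n m (l + 1)
      = 1 / ((N : ℝ) * m + a) ^ 2 * tStarFinBetween N a n m l
        + tStarFinBetween N a n (m + 1) (l + 1) := by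
  classical
  set X := Fin (n + 1)
  set m0 : X := ⟨m, by omega⟩ with hm0
  set w : X → ℝ := fun x => (1 : ℝ) / ((N : ℝ) * (x : ℕ) + a) ^ 2 with hw
  set F : (Fin (l + 1) → X) → ℝ := fun k =>
    if (∀ i, m ≤ (k i : ℕ)) ∧ (∀ i j : Fin (l + 1), i ≤ j → (k j : ℕ) ≤ (k i : ℕ)) then
      ∏ i : Fin (l + 1), w (k i) else 0 with hF
  set F' : (Fin (l + 1) → X) → ℝ := fun k =>
    if (∀ i, m + 1 ≤ (k i : ℕ)) ∧ (∀ i j : Fin (l + 1), i ≤ j → (k j : ℕ) ≤ (k i : ℕ)) then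
      ∏ i : Fin (l + 1), w (k i) else 0 with hF'
  set G : (Fin l → X) → ℝ := fun q =>
    if (∀ i, m ≤ (q i : ℕ)) ∧ (∀ i j : Fin l, i ≤ j → (q j : ℕ) ≤ (q i : ℕ)) then
      w m0 * ∏ i : Fin l, w (q i) else 0 with hG
  have esum : ∀ (H : (Fin (l + 1) → X) → ℝ),
      (∑ k : Fin (l + 1) → X, H k) = ∑ x : X, ∑ q : Fin l → X, H (Fin.snoc q x) := by
    intro H
    rw [← Fintype.sum_equiv (Fin.snocEquiv fun _ => X) (fun p => H (Fin.snoc p.2 p.1)) H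
      (fun p => rfl), Fintype.sum_prod_type]
  have hL : tStarFinBetween N a n m (l + 1) = ∑ k : Fin (l + 1) → X, F k := rfl
  have hR2 : tStarFinBetween N a n (m + 1) (l + 1) = ∑ k : Fin (l + 1) → X, F' k := rfl
  have hR1 : 1 / ((N : ℝ) * m + a) ^ 2 * tStarFinBetween N a n m l
      = ∑ q : Fin l → X, G q := by
    unfold tStarFinBetween
    rw [Finset.mul_sum]
    refine Finset.sum_congr rfl fun q _ => ?_
    simp only [hG, mul_ite, mul_zero]
    rfl
  rw [hL, hR2, hR1, esum F, esum F']
  -- key pointwise claim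
  have key : ∀ (x : X) (q : Fin l → X),
      F (Fin.snoc q x) = (if x = m0 then G q else 0) + F' (Fin.snoc q x) := by
    intro x q
    have hprod : (∏ i : Fin (l + 1), w ((Fin.snoc q x : Fin (l + 1) → X) i)) = (∏ i : Fin l, w (q i)) * w x := by
      rw [Fin.prod_univ_castSucc]
      simp
    by_cases hx : x = m0
    · subst hx
      have hF'0 : F' (Fin.snoc q m0) = 0 := by
        simp only [hF']
        rw [if_neg]
        rintro ⟨h1, -⟩
        have := h1 (Fin.last l)
        simp [Fin.snoc_last, hm0] at this
      rw [hF'0, add_zero, if_pos rfl]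
      have hiff : ((∀ i, m ≤ (((Fin.snoc q m0 : Fin (l + 1) → X) i : X) : ℕ)) ∧
          (∀ i j : Fin (l + 1), i ≤ j → (((Fin.snoc q m0 : Fin (l + 1) → X) j : X) : ℕ) ≤ (((Fin.snoc q m0 : Fin (l + 1) → X) i : X) : ℕ)))
          ↔ ((∀ i, m ≤ (q i : ℕ)) ∧ (∀ i j : Fin l, i ≤ j → (q j : ℕ) ≤ (q i : ℕ))) := by
        constructor
        · rintro ⟨h1, h2⟩
          refine ⟨fun i => ?_, fun i j hij => ?_⟩
          · have := h1 (Fin.castSucc i); simpa using this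
          · have := h2 (Fin.castSucc i) (Fin.castSucc j)
              (by rwa [Fin.castSucc_le_castSucc_iff])
            simpa using this
        · rintro ⟨h1, h2⟩
          have hall : ∀ i : Fin (l + 1), m ≤ (((Fin.snoc q m0 : Fin (l + 1) → X) i : X) : ℕ) := by
            intro i
            induction i using Fin.lastCases with
            | last => simp [hm0]
            | cast i => simpa using h1 i
          refine ⟨hall, fun i j hij => ?_⟩
          induction j using Fin.lastCases with
          | last => simpa [hm0] using hall i
          | cast j =>
            induction i using Fin.lastCases with
            | last =>
              exact absurd hij (by simp [Fin.le_def, Fin.lt_def])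
            | cast i =>
              have := h2 i j (by rwa [Fin.castSucc_le_castSucc_iff] at hij)
              simpa using this
      simp only [hF, hG]
      by_cases hq : (∀ i, m ≤ (q i : ℕ)) ∧ (∀ i j : Fin l, i ≤ j → (q j : ℕ) ≤ (q i : ℕ))
      · rw [if_pos (hiff.mpr hq), if_pos hq, hprod]
        ring
      · rw [if_neg (fun h => hq (hiff.mp h)), if_neg hq]
    · rw [if_neg hx, zero_add]
      have hxm : (x : ℕ) ≠ m := by
        intro h; exact hx (by rw [hm0]; exact Fin.ext h)
      have hiff : ((∀ i, m ≤ (((Fin.snoc q x : Fin (l + 1) → X) i : X) : ℕ)) ∧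
          (∀ i j : Fin (l + 1), i ≤ j → (((Fin.snoc q x : Fin (l + 1) → X) j : X) : ℕ) ≤ (((Fin.snoc q x : Fin (l + 1) → X) i : X) : ℕ)))
          ↔ ((∀ i, m + 1 ≤ (((Fin.snoc q x : Fin (l + 1) → X) i : X) : ℕ)) ∧
          (∀ i j : Fin (l + 1), i ≤ j → (((Fin.snoc q x : Fin (l + 1) → X) j : X) : ℕ) ≤ (((Fin.snoc q x : Fin (l + 1) → X) i : X) : ℕ))) := by
        constructor
        · rintro ⟨h1, h2⟩
          refine ⟨fun i => ?_, h2⟩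
          have hxl : m + 1 ≤ (x : ℕ) := by
            have := h1 (Fin.last l); simp [Fin.snoc_last] at this; omega
          have := h2 i (Fin.last l) (Fin.le_last i)
          simp only [Fin.snoc_last] at this
          omega
        · rintro ⟨h1, h2⟩
          exact ⟨fun i => le_trans (by omega) (h1 i), h2⟩
      simp only [hF, hF']
      by_cases hc : (∀ i, m ≤ (((Fin.snoc q x : Fin (l + 1) → X) i : X) : ℕ)) ∧
          (∀ i j : Fin (l + 1), i ≤ j → (((Fin.snoc q x : Fin (l + 1) → X) j : X) : ℕ) ≤ (((Fin.snoc q x : Fin (l + 1) → X) i : X) : ℕ))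
      · rw [if_pos hc, if_pos (hiff.mp hc)]
      · rw [if_neg hc, if_neg (fun h => hc (hiff.mpr h))]
  calc (∑ x : X, ∑ q : Fin l → X, F (Fin.snoc q x))
      = ∑ x : X, ∑ q : Fin l → X,
          ((if x = m0 then G q else 0) + F' (Fin.snoc q x)) := by
        refine Finset.sum_congr rfl fun x _ => Finset.sum_congr rfl fun q _ => key x q
    _ = (∑ x : X, if x = m0 then ∑ q : Fin l → X, G q else 0)
          + ∑ x : X, ∑ q : Fin l → X, F' (Fin.snoc q x) := by
        rw [← Finset.sum_add_distrib]
        refine Finset.sum_congr rfl fun x _ => ?_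
        rw [Finset.sum_add_distrib]
        congr 1
        split <;> simp
    _ = (∑ q : Fin l → X, G q) + ∑ x : X, ∑ q : Fin l → X, F' (Fin.snoc q x) := by
        rw [Finset.sum_ite_eq' Finset.univ m0]
        simp

lemma tStar_cauchy (N a n m : ℕ) (hm : m ≤ n) (l : ℕ) :
    tStarFinBetween N a n m l
      = ∑ p ∈ Finset.HasAntidiagonal.antidiagonal l,
          (1 / ((N : ℝ) * m + a) ^ 2) ^ p.1 * tStarFinBetween N a n (m + 1) p.2 := by
  induction l with
  | zero => simp [tStar_zero]
  | succ l ih =>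
    rw [Finset.Nat.sum_antidiagonal_succ
      (f := fun p => (1 / ((N : ℝ) * m + a) ^ 2) ^ p.1 * tStarFinBetween N a n (m + 1) p.2)]
    simp only [pow_zero, one_mul]
    rw [tStar_rec N a n m hm l, ih, Finset.mul_sum, add_comm]
    congr 1
    refine Finset.sum_congr rfl fun p _ => ?_
    rw [pow_succ]
    ring

/-- Formula (3.1): for `1 ≤ a ≤ N`, `m ≤ n` and `|z| < 1`,
`∏_{k=m}^{n} (1 − z²/(Nk+a)²)⁻¹ = ∑_{l=0}^{∞} ⁿₘt*_{N,a}({2}^l) z^{2l}`,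
the power series on the right converging absolutely. -/
theorem prod_eq_sum_tStarFinBetween
    (N a : ℕ) (h1 : 1 ≤ a) (h2 : a ≤ N) (n m : ℕ) (hmn : m ≤ n)
    (z : ℂ) (hz : ‖z‖ < 1) :
    Summable (fun l : ℕ =>
      ‖((tStarFinBetween N a n m l : ℝ) : ℂ) * z ^ (2 * l)‖) ∧
    ∏ k ∈ Finset.Icc m n, (1 - z ^ 2 / ((N : ℂ) * k + a) ^ 2)⁻¹
      = ∑' l : ℕ, ((tStarFinBetween N a n m l : ℝ) : ℂ) * z ^ (2 * l) := by
  have hempty : ∀ m' : ℕ, n < m' →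
      Summable (fun l : ℕ =>
        ‖((tStarFinBetween N a n m' l : ℝ) : ℂ) * z ^ (2 * l)‖) ∧
      ∏ k ∈ Finset.Icc m' n, (1 - z ^ 2 / ((N : ℂ) * k + a) ^ 2)⁻¹
        = ∑' l : ℕ, ((tStarFinBetween N a n m' l : ℝ) : ℂ) * z ^ (2 * l) := by
    intro m' hm'
    have hf : ∀ l : ℕ, ((tStarFinBetween N a n m' l : ℝ) : ℂ) * z ^ (2 * l)
        = if l = 0 then 1 else 0 := by
      intro l
      cases l with
      | zero => simp [tStar_zero]
      | succ l => simp [tStar_of_gt N a n m' hm' l]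
    constructor
    · apply Summable.congr (f := fun l : ℕ => ‖(if l = 0 then (1:ℂ) else 0)‖)
      · apply summable_of_ne_finset_zero (s := {0})
        intro b hb
        simp at hb
        simp [hb]
      · intro l; rw [hf l]
    · rw [Finset.Icc_eq_empty (by omega), Finset.prod_empty]
      rw [tsum_congr hf, tsum_eq_single 0 (by intro b hb; simp [hb])]
      simp
  have key : ∀ d m' : ℕ, n + 1 ≤ m' + d →
      Summable (fun l : ℕ =>
        ‖((tStarFinBetween N a n m' l : ℝ) : ℂ) * z ^ (2 * l)‖) ∧
      ∏ k ∈ Finset.Icc m' n, (1 - z ^ 2 / ((N : ℂ) * k + a) ^ 2)⁻¹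
        = ∑' l : ℕ, ((tStarFinBetween N a n m' l : ℝ) : ℂ) * z ^ (2 * l) := by
    intro d
    induction d with
    | zero => intro m' hm'; exact hempty m' (by omega)
    | succ d ih =>
      intro m' hm'
      by_cases hcase : n < m'
      · exact hempty m' hcase
      push_neg at hcase
      obtain ⟨ih1, ih2⟩ := ih (m' + 1) (by omega)
      set c : ℂ := (N : ℂ) * m' + a with hc
      have hcnorm : (1 : ℝ) ≤ ‖c‖ := by
        have : c = ((N * m' + a : ℕ) : ℂ) := by push_cast; ring
        rw [this, Complex.norm_natCast]
        have : 1 ≤ N * m' + a := by omega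
        exact_mod_cast this
      set w : ℂ := z ^ 2 / c ^ 2 with hwdef
      have hwnorm : ‖w‖ < 1 := by
        rw [hwdef, norm_div]
        calc ‖z ^ 2‖ / ‖c ^ 2‖ ≤ ‖z ^ 2‖ := by
              apply div_le_self (norm_nonneg _)
              rw [norm_pow]
              nlinarith
          _ < 1 := by
              rw [norm_pow]
              nlinarith [norm_nonneg z]
      have hg : Summable (fun i : ℕ => ‖w ^ i‖) := by
        apply Summable.congr (f := fun i : ℕ => ‖w‖ ^ i)
        · exact summable_geometric_of_lt_one (norm_nonneg _) hwnorm
        · intro i; rw [norm_pow]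
      have keyl : ∀ l : ℕ, ((tStarFinBetween N a n m' l : ℝ) : ℂ) * z ^ (2 * l)
          = ∑ p ∈ Finset.HasAntidiagonal.antidiagonal l,
              w ^ p.1 * (((tStarFinBetween N a n (m' + 1) p.2 : ℝ) : ℂ) * z ^ (2 * p.2)) := by
        intro l
        rw [tStar_cauchy N a n m' hcase l]
        push_cast
        rw [Finset.sum_mul]
        refine Finset.sum_congr rfl fun p hp => ?_
        have hp' : p.1 + p.2 = l := Finset.HasAntidiagonal.mem_antidiagonal.mp hp
        have hz2 : z ^ (2 * l) = z ^ (2 * p.1) * z ^ (2 * p.2) := by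
          rw [← pow_add]; congr 1; omega
        rw [hz2, hwdef, hc]
        simp only [div_pow, one_pow, ← pow_mul]
        ring
      constructor
      · have hS := summable_norm_sum_mul_antidiagonal_of_summable_norm hg ih1
        exact hS.congr fun l => congrArg norm (keyl l).symm
      · have hsplit : Finset.Icc m' n = insert m' (Finset.Icc (m' + 1) n) := by
          ext x; simp only [Finset.mem_Icc, Finset.mem_insert]; omega
        rw [hsplit, Finset.prod_insert (by simp)]
        rw [ih2]
        have : (1 - z ^ 2 / ((N : ℂ) * (m' : ℕ) + a) ^ 2)⁻¹ = (1 - w)⁻¹ := by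
          rw [hwdef, hc]
        rw [this, ← tsum_geometric_of_norm_lt_one hwnorm]
        rw [tsum_mul_tsum_eq_tsum_sum_antidiagonal_of_summable_norm hg ih1]
        exact tsum_congr fun l => (keyl l).symm
  exact key (n + 1 - m) m (by omega)
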